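/- For every closed expression e, the CESK machine and the CESK* machine (with store-allocated continuations) produce isomorphic reachable state sets: there is a bijection between executions such that at each step the CESK* continuation, when its address pointers are recursively dereferenced through the store, equals the CESK continuation. -/

import Mathlib

/- Statement 1: for every closed expression, the CESK machine and the CESK*
   machine (with store-allocated continuations) produce isomorphic reachable
   state sets: executions correspond step by step, and at each step the CESK*
   continuation, with its address pointers recursively dereferenced through
   the store, equals the CESK continuation. -/

inductive Exp : Type
  | ref : String → Exp
  | lam : String → Exp → Exp
  | app : Exp → Exp → Exp
deriving DecidableEq

def Exp.fv : Exp → List String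
  | .ref x => [x]
  | .lam x e => e.fv.filter (· ≠ x)
  | .app e₀ e₁ => e₀.fv ++ e₁.fv

def Exp.Closed (e : Exp) : Prop := e.fv = []

abbrev Addr := ℕ
abbrev Env := List (String × Addr)
abbrev Clo := Exp × Env

/- CESK machine: inductively defined continuations, store holds closures. -/

inductive Kont : Type
  | mt
  | ar (e : Exp) (ρ : Env) (κ : Kont)
  | fn (v : Exp) (ρ : Env) (κ : Kont)

abbrev Store := List (Addr × Clo)
abbrev CESKState := Exp × Env × Store × Kont

inductive CESKStep : CESKState → CESKState → Prop
  | var {x ρ σ κ a v ρ'} :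
      List.lookup x ρ = some a → List.lookup a σ = some (v, ρ') →
      CESKStep (.ref x, ρ, σ, κ) (v, ρ', σ, κ)
  | app {e₀ e₁ ρ σ κ} :
      CESKStep (.app e₀ e₁, ρ, σ, κ) (e₀, ρ, σ, .ar e₁ ρ κ)
  | arg {x e ρ σ e' ρ' κ} :
      CESKStep (.lam x e, ρ, σ, .ar e' ρ' κ) (e', ρ', σ, .fn (.lam x e) ρ κ)
  | beta {x e ρ σ y e' ρ' κ} {a : Addr} :
      List.lookup a σ = none →
      CESKStep (.lam x e, ρ, σ, .fn (.lam y e') ρ' κ)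
        (e', (y, a) :: ρ', (a, (Exp.lam x e, ρ)) :: σ, κ)

def injCESK (e : Exp) : CESKState := (e, [], [], .mt)

/- CESK* machine: continuations carry a pointer to the rest of the
   continuation, and the store maps addresses to closures or continuations. -/

inductive PKont : Type
  | mt
  | ar (e : Exp) (ρ : Env) (a : Addr)
  | fn (v : Exp) (ρ : Env) (a : Addr)

inductive Storable : Type
  | clo (c : Clo)
  | kont (κ : PKont)

abbrev PStore := List (Addr × Storable)
abbrev CESKPState := Exp × Env × PStore × PKont

inductive CESKPStep : CESKPState → CESKPState → Prop
  | var {x ρ σ κ a v ρ'} :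
      List.lookup x ρ = some a → List.lookup a σ = some (.clo (v, ρ')) →
      CESKPStep (.ref x, ρ, σ, κ) (v, ρ', σ, κ)
  | app {e₀ e₁ ρ σ κ} {a : Addr} :
      List.lookup a σ = none →
      CESKPStep (.app e₀ e₁, ρ, σ, κ)
        (e₀, ρ, (a, .kont κ) :: σ, .ar e₁ ρ a)
  | arg {x e ρ σ e' ρ' a} :
      CESKPStep (.lam x e, ρ, σ, .ar e' ρ' a) (e', ρ', σ, .fn (.lam x e) ρ a)
  | beta {x e ρ σ y e' ρ' κ} {b a : Addr} :
      List.lookup b σ = some (.kont κ) →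
      List.lookup a σ = none →
      CESKPStep (.lam x e, ρ, σ, .fn (.lam y e') ρ' b)
        (e', (y, a) :: ρ', (a, .clo (Exp.lam x e, ρ)) :: σ, κ)

def injCESKP (e : Exp) : CESKPState := (e, [], [], .mt)

/-- Unfolding a CESK* continuation into a CESK continuation by recursively
    dereferencing continuation addresses through the store. -/
inductive Unfold (σ : PStore) : PKont → Kont → Prop
  | mt : Unfold σ .mt .mt
  | ar {e ρ a κ' κc} :
      List.lookup a σ = some (.kont κ') → Unfold σ κ' κc →
      Unfold σ (.ar e ρ a) (.ar e ρ κc)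
  | fn {v ρ a κ' κc} :
      List.lookup a σ = some (.kont κ') → Unfold σ κ' κc →
      Unfold σ (.fn v ρ a) (.fn v ρ κc)

/-- Correspondence between CESK* and CESK states: same control and
    environment, the CESK store is the closure part of the CESK* store, and
    the CESK continuation is the unfolding of the CESK* continuation. -/
def Corr : CESKPState → CESKState → Prop
  | (e, ρ, σ, κ), (e', ρ', σ', κ') =>
      e = e' ∧ ρ = ρ' ∧
      (∀ (a : Addr) (c : Clo),
        List.lookup a σ' = some c ↔ List.lookup a σ = some (.clo c)) ∧
      Unfold σ κ κ'

/-- Exactly-n-step iteration of a relation. -/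
def StepN {α : Type _} (r : α → α → Prop) : ℕ → α → α → Prop
  | 0, a, b => a = b
  | n + 1, a, b => ∃ c, r a c ∧ StepN r n c b

/-! ### Auxiliary lemmas -/

lemma lookup_cons' {α : Type _} (a k : ℕ) (x : α) (l : List (ℕ × α)) :
    List.lookup a ((k, x) :: l) = if a = k then some x else l.lookup a := by
  by_cases h : a = k
  · simp [List.lookup, h]
  · have hb : (a == k) = false := by simp [h]
    simp [List.lookup, hb, h]

lemma lookup_none_of_not_mem {α : Type _} {l : List (ℕ × α)} {a : ℕ}
    (h : a ∉ l.map Prod.fst) : l.lookup a = none := by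
  induction l with
  | nil => rfl
  | cons p t ih =>
    obtain ⟨k, x⟩ := p
    simp only [List.map_cons, List.mem_cons, not_or] at h
    rw [lookup_cons', if_neg h.1]
    exact ih h.2

lemma fresh_exists (l : List ℕ) : ∃ a : ℕ, a ∉ l := by
  obtain ⟨a, ha⟩ := Infinite.exists_notMem_finset l.toFinset
  exact ⟨a, fun h => ha (List.mem_toFinset.2 h)⟩

lemma Unfold.weaken {σ : PStore} {κp κ} (h : Unfold σ κp κ) {k : Addr}
    (hk : σ.lookup k = none) (x : Storable) : Unfold ((k, x) :: σ) κp κ := by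
  induction h with
  | mt => exact .mt
  | ar hl _ ih =>
      refine .ar ?_ ih
      rw [lookup_cons', if_neg ?_]
      · exact hl
      · rintro rfl; rw [hl] at hk; exact nomatch hk
  | fn hl _ ih =>
      refine .fn ?_ ih
      rw [lookup_cons', if_neg ?_]
      · exact hl
      · rintro rfl; rw [hl] at hk; exact nomatch hk

/-- Store entries of the CESK machine only grow along a step. -/
lemma cesk_mono_step {ς ς' : CESKState} (h : CESKStep ς ς') (a : Addr)
    (hn : ς'.2.2.1.lookup a = none) : ς.2.2.1.lookup a = none := by
  cases h with
  | var _ _ => exact hn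
  | app => exact hn
  | arg => exact hn
  | beta _ =>
      simp only at hn ⊢
      rw [lookup_cons'] at hn
      split at hn
      · exact nomatch hn
      · exact hn

lemma cesk_mono_n {n : ℕ} {ς ς' : CESKState} (h : StepN CESKStep n ς ς') (a : Addr)
    (hn : ς'.2.2.1.lookup a = none) : ς.2.2.1.lookup a = none := by
  induction n generalizing ς with
  | zero => cases h; exact hn
  | succ m ih =>
      obtain ⟨c, hc, ht⟩ := h
      exact cesk_mono_step hc a (ih ht)

/-- Forward simulation, one step.  `σf` is the final CESK store of the
    remaining execution; all continuation addresses of the CESK* store must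
    avoid it. -/
lemma fwd_step {e : Exp} {ρ : Env} {σ : Store} {κ : Kont} {e' ρ' σ' κ'}
    {σp : PStore} {κp : PKont} (σf : Store)
    (hiff : ∀ a c, σ.lookup a = some c ↔ σp.lookup a = some (.clo c))
    (hunf : Unfold σp κp κ)
    (hK : ∀ a κx, σp.lookup a = some (.kont κx) → σf.lookup a = none)
    (hmono : ∀ a c, σ'.lookup a = some c → ∃ c', σf.lookup a = some c')
    (hs : CESKStep (e, ρ, σ, κ) (e', ρ', σ', κ')) :
    ∃ σp' κp', CESKPStep (e, ρ, σp, κp) (e', ρ', σp', κp') ∧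
      (∀ a c, σ'.lookup a = some c ↔ σp'.lookup a = some (.clo c)) ∧
      Unfold σp' κp' κ' ∧
      ∀ a κx, σp'.lookup a = some (.kont κx) → σf.lookup a = none := by
  cases hs with
  | var hx ha =>
      rename_i x a
      exact ⟨σp, κp, .var hx ((hiff a (e', ρ')).1 ha), hiff, hunf, hK⟩
  | app =>
      rename_i e₁
      obtain ⟨k, hk⟩ := fresh_exists (σp.map Prod.fst ++ σf.map Prod.fst)
      simp only [List.mem_append, not_or] at hk
      have hkp : σp.lookup k = none := lookup_none_of_not_mem hk.1
      have hkf : σf.lookup k = none := lookup_none_of_not_mem hk.2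
      refine ⟨(k, .kont κp) :: σp, .ar e₁ ρ k, .app hkp, ?_,
        .ar (by rw [lookup_cons', if_pos rfl]) (hunf.weaken hkp _), ?_⟩
      · intro a c
        rw [lookup_cons']
        split
        · subst a
          constructor
          · intro h
            rw [(hiff k c).1 h] at hkp
            exact nomatch hkp
          · intro h
            exact absurd (Option.some.inj h) (fun h' => nomatch h')
        · exact hiff a c
      · intro a κx
        rw [lookup_cons']
        split
        · intro _; subst a; exact hkf
        · exact hK a κx
  | arg =>
      rename_i x eb κ₂
      cases hunf with
      | ar hl hu =>
          exact ⟨σp, _, .arg, hiff, .fn hl hu, hK⟩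
  | beta ha =>
      rename_i x eb y ρ₂ a
      cases hunf with
      | fn hb hu =>
          rename_i κr
          have hap : σp.lookup a = none := by
            cases h : σp.lookup a with
            | none => rfl
            | some s =>
                cases s with
                | clo c =>
                    rw [(hiff a c).2 h] at ha
                    exact nomatch ha
                | kont κx =>
                    exfalso
                    obtain ⟨c', hc'⟩ := hmono a (Exp.lam x eb, ρ)
                      (by rw [lookup_cons', if_pos rfl])
                    rw [hK a κx h] at hc'
                    exact nomatch hc'
          refine ⟨(a, .clo (Exp.lam x eb, ρ)) :: σp, κr,
            .beta hb hap, ?_, hu.weaken hap _, ?_⟩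
          · intro a' c
            rw [lookup_cons', lookup_cons']
            split
            · constructor
              · intro h
                rw [Option.some.inj h]
              · intro h
                rw [(Storable.clo.inj (Option.some.inj h))]
            · exact hiff a' c
          · intro a' κx
            rw [lookup_cons']
            split
            · intro h
              exact absurd (Option.some.inj h) (fun h' => nomatch h')
            · exact hK a' κx

lemma fwd_n : ∀ (n : ℕ) (ς ςf : CESKState) (ςp : CESKPState),
    StepN CESKStep n ς ςf → Corr ςp ς →
    (∀ a κx, ςp.2.2.1.lookup a = some (.kont κx) → ςf.2.2.1.lookup a = none) →
    ∃ ςp', StepN CESKPStep n ςp ςp' ∧ Corr ςp' ςf := by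
  intro n
  induction n with
  | zero =>
      intro ς ςf ςp h hc _
      cases h
      exact ⟨ςp, rfl, hc⟩
  | succ m ih =>
      rintro ⟨e, ρ, σ, κ⟩ ςf ⟨ep, ρp, σp, κp⟩ ⟨⟨e', ρ', σ', κ'⟩, hstep, htail⟩ hc hK
      obtain ⟨he, hρ, hiff, hunf⟩ := hc
      subst he
      subst hρ
      have hmono : ∀ a c, σ'.lookup a = some c → ∃ c', ςf.2.2.1.lookup a = some c' := by
        intro a c h
        cases hcf : ςf.2.2.1.lookup a with
        | none =>
            rw [cesk_mono_n htail a hcf] at h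
            exact nomatch h
        | some c' => exact ⟨c', rfl⟩
      obtain ⟨σp', κp', hstep', hiff', hunf', hK'⟩ :=
        fwd_step ςf.2.2.1 hiff hunf hK hmono hstep
      obtain ⟨ςp', ht', hcf⟩ := ih _ ςf (e', ρ', σp', κp') htail ⟨rfl, rfl, hiff', hunf'⟩ hK'
      exact ⟨ςp', ⟨_, hstep', ht'⟩, hcf⟩

/-- Backward simulation, one step. -/
lemma bwd_step {e : Exp} {ρ : Env} {σ : Store} {κ : Kont}
    {σp : PStore} {κp : PKont} {ςp' : CESKPState}
    (hiff : ∀ a c, σ.lookup a = some c ↔ σp.lookup a = some (.clo c))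
    (hunf : Unfold σp κp κ)
    (hs : CESKPStep (e, ρ, σp, κp) ςp') :
    ∃ ς', CESKStep (e, ρ, σ, κ) ς' ∧ Corr ςp' ς' := by
  cases hs with
  | var hx ha =>
      rename_i x a v ρ₁
      exact ⟨(v, ρ₁, σ, κ), .var hx ((hiff a (v, ρ₁)).2 ha), rfl, rfl, hiff, hunf⟩
  | app hk =>
      rename_i e₀ e₁ k
      have hkσ : σ.lookup k = none := by
        cases h : σ.lookup k with
        | none => rfl
        | some c => rw [(hiff k c).1 h] at hk; exact nomatch hk
      refine ⟨(e₀, ρ, σ, .ar e₁ ρ κ), .app, rfl, rfl, ?_,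
        .ar (by rw [lookup_cons', if_pos rfl]) (hunf.weaken hk _)⟩
      intro a c
      rw [lookup_cons']
      split
      · subst a
        constructor
        · intro h; rw [hkσ] at h; exact nomatch h
        · intro h
          exact absurd (Option.some.inj h) (fun h' => nomatch h')
      · exact hiff a c
  | arg =>
      rename_i x eb e₂ ρ₂ a
      cases hunf with
      | ar hl hu =>
          rename_i κ₁ κc
          exact ⟨(e₂, ρ₂, σ, .fn (.lam x eb) ρ κc), .arg, rfl, rfl, hiff, .fn hl hu⟩
  | beta hb ha =>
      rename_i x eb y e₂ ρ₂ κ₂ b a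
      cases hunf with
      | fn hb' hu =>
          rename_i κr κc
          have hκ : κr = κ₂ := by
            rw [hb] at hb'
            exact (Storable.kont.inj (Option.some.inj hb')).symm
          subst hκ
          have haσ : σ.lookup a = none := by
            cases h : σ.lookup a with
            | none => rfl
            | some c => rw [(hiff a c).1 h] at ha; exact nomatch ha
          refine ⟨(e₂, (y, a) :: ρ₂, (a, (Exp.lam x eb, ρ)) :: σ, κc),
            .beta haσ, rfl, rfl, ?_, hu.weaken ha _⟩
          intro a' c
          rw [lookup_cons', lookup_cons']
          split
          · constructor
            · intro h
              rw [Option.some.inj h]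
            · intro h
              rw [(Storable.clo.inj (Option.some.inj h))]
          · exact hiff a' c

lemma bwd_n : ∀ (n : ℕ) (ς : CESKState) (ςp ςpf : CESKPState),
    StepN CESKPStep n ςp ςpf → Corr ςp ς →
    ∃ ς', StepN CESKStep n ς ς' ∧ Corr ςpf ς' := by
  intro n
  induction n with
  | zero =>
      intro ς ςp ςpf h hc
      cases h
      exact ⟨ς, rfl, hc⟩
  | succ m ih =>
      rintro ⟨e, ρ, σ, κ⟩ ⟨ep, ρp, σp, κp⟩ ςpf ⟨c, hstep, htail⟩ hc
      obtain ⟨he, hρ, hiff, hunf⟩ := hc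
      subst he
      subst hρ
      obtain ⟨ς', hstep', hc'⟩ := bwd_step hiff hunf hstep
      obtain ⟨ςf, ht', hcf⟩ := ih ς' c ςpf htail hc'
      exact ⟨ςf, ⟨ς', hstep', ht'⟩, hcf⟩

lemma corr_init (e : Exp) : Corr (injCESKP e) (injCESK e) := by
  refine ⟨rfl, rfl, ?_, .mt⟩
  intro a c
  simp [List.lookup]

theorem cesk_ceskstar_lockstep (e : Exp) (he : e.Closed) (n : ℕ) :
    (∀ ς : CESKState, StepN CESKStep n (injCESK e) ς →
      ∃ ςp : CESKPState, StepN CESKPStep n (injCESKP e) ςp ∧ Corr ςp ς) ∧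
    (∀ ςp : CESKPState, StepN CESKPStep n (injCESKP e) ςp →
      ∃ ς : CESKState, StepN CESKStep n (injCESK e) ς ∧ Corr ςp ς) := by
  constructor
  · intro ς h
    exact fwd_n n (injCESK e) ς (injCESKP e) h (corr_init e)
      (fun a κx hx => by simp [injCESKP, List.lookup] at hx)
  · intro ςp h
    exact bwd_n n (injCESK e) (injCESKP e) ςp h (corr_init e)
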